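/- Let n, m, k be positive integers such that 1 < m < n, k = n − m, b = n − m + 1, and a = m·(n−m+1)/n is an integer. Then the graph G₁ given by Construction 1 is k-critical bipartite if and only if gcd(n,m) = m (i.e., m divides n). -/

import Mathlib

/-- A bipartite graph of order `(n,m)` (with `n > m`), given by its adjacency relation
`E : Fin n → Fin m → Prop`, is `k`-critical bipartite (for `k = n − m`) if for every subset
`U'` of the larger color class with `|U'| = m`, the induced subgraph `G[U',V]` has a perfect
matching, i.e. there is an injection `f : V → U'` with `f v` adjacent to `v` for all `v`. -/
def IsKCriticalBipartite (n m : ℕ) (E : Fin n → Fin m → Prop) : Prop :=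
  ∀ U' : Finset (Fin n), U'.card = m →
    ∃ f : Fin m → Fin n, Function.Injective f ∧ ∀ v : Fin m, f v ∈ U' ∧ E (f v) v

/-- Adjacency of Construction 1: with `c = gcd(n,m)`, `x = n/c`, `y = m/c`, vertex `u_i`
is adjacent to the vertices `v_{(⌊i/x⌋·y+α) mod m}` for `α ∈ {0,…,a−1}`. -/
def cons1Adj (n m a : ℕ) (u : Fin n) (v : Fin m) : Prop :=
  ∃ α < a, ((u : ℕ) / (n / Nat.gcd n m) * (m / Nat.gcd n m) + α) % m = (v : ℕ)

open Finset


def arcNb (m a : ℕ) (S : Finset (ZMod m)) : Finset (ZMod m) :=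
  (Finset.range a).biUnion (fun α => S.image (fun s => s - (α : ZMod m)))

lemma zmod_closed_univ {m : ℕ} [NeZero m] (T : Finset (ZMod m)) (hne : T.Nonempty)
    (h : ∀ t ∈ T, t - 1 ∈ T) : T = Finset.univ := by
  obtain ⟨t0, ht0⟩ := hne
  ext z
  simp only [Finset.mem_univ, iff_true]
  have key : ∀ k : ℕ, t0 - (k : ZMod m) ∈ T := by
    intro k
    induction k with
    | zero => simpa using ht0
    | succ k ih =>
      have h2 := h _ ih
      have : t0 - ((k+1 : ℕ) : ZMod m) = t0 - (k : ZMod m) - 1 := by push_cast; ring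
      rw [this]; exact h2
  have hk := key (t0 - z).val
  rwa [ZMod.natCast_val, ZMod.cast_id, sub_sub_cancel] at hk

lemma arcNb_succ (m : ℕ) (a : ℕ) (ha : 1 ≤ a) (S : Finset (ZMod m)) :
    arcNb m (a+1) S = arcNb m a S ∪ (arcNb m a S).image (fun z => z - 1) := by
  ext z
  simp only [arcNb, mem_biUnion, mem_range, mem_image, mem_union]
  constructor
  · rintro ⟨α, hα, s, hs, rfl⟩
    rcases lt_or_ge α a with h | h
    · exact Or.inl ⟨α, h, s, hs, rfl⟩
    · have hαa : α = a := by omega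
      refine Or.inr ⟨s - ((a-1 : ℕ) : ZMod m), ⟨a-1, by omega, s, hs, rfl⟩, ?_⟩
      have hc : ((α : ℕ) : ZMod m) = ((a - 1 : ℕ) : ZMod m) + 1 := by
        have h3 : α = (a-1) + 1 := by omega
        rw [h3]; push_cast; ring_nf
      rw [hc]; ring
  · rintro (⟨α, hα, s, hs, rfl⟩ | ⟨w, ⟨α, hα, s, hs, rfl⟩, rfl⟩)
    · exact ⟨α, by omega, s, hs, rfl⟩
    · refine ⟨α + 1, by omega, s, hs, ?_⟩
      push_cast; ring

lemma subset_arcNb (m a : ℕ) (ha : 1 ≤ a) (S : Finset (ZMod m)) : S ⊆ arcNb m a S := by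
  intro z hz
  simp only [arcNb, mem_biUnion, mem_range, mem_image]
  exact ⟨0, by omega, z, hz, by simp⟩

lemma arc_card {m : ℕ} [NeZero m] (a : ℕ) (S : Finset (ZMod m)) (hS : S.Nonempty) :
    min m (S.card + a) ≤ (arcNb m (a+1) S).card := by
  induction a with
  | zero =>
    have : arcNb m 1 S = S := by
      simp [arcNb]
    rw [this]
    have := S.card_le_univ
    rw [ZMod.card] at this
    omega
  | succ a ih =>
    rw [arcNb_succ m (a+1) (by omega) S]
    set T := arcNb m (a+1) S with hT
    have hTm : T.card ≤ m := by
      have h0 := T.card_le_univ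
      rwa [ZMod.card] at h0
    by_cases hTu : T = Finset.univ
    · have hTc : T.card = m := by
        rw [hTu, Finset.card_univ]
        exact ZMod.card m
      have h2 : T.card ≤ (T ∪ T.image (fun z => z - 1)).card :=
        Finset.card_le_card Finset.subset_union_left
      omega
    · have hTne : T.Nonempty := hS.mono (subset_arcNb m (a+1) (by omega) S)
      have hex : ∃ t ∈ T, t - 1 ∉ T := by
        by_contra hc
        push_neg at hc
        exact hTu (zmod_closed_univ T hTne hc)
      obtain ⟨t, htT, ht1⟩ := hex
      have hsub : insert (t - 1) T ⊆ T ∪ T.image (fun z => z - 1) := by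
        intro z hz
        rcases Finset.mem_insert.mp hz with rfl | hz
        · exact Finset.mem_union_right _ (Finset.mem_image.mpr ⟨t, htT, rfl⟩)
        · exact Finset.mem_union_left _ hz
      have hcard : T.card + 1 ≤ (T ∪ T.image (fun z => z - 1)).card := by
        have := Finset.card_le_card hsub
        rwa [Finset.card_insert_of_notMem ht1] at this
      have hTlt : T.card < m := by
        rcases lt_or_eq_of_le hTm with h | h
        · exact h
        · exact absurd (Finset.eq_univ_of_card T (h.trans (ZMod.card m).symm)) hTu
      omega

lemma fiber_card (n m x : ℕ) (hx : 0 < x) (hnx : m * x = n) (j : Fin m) :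
    ((Finset.univ : Finset (Fin n)).filter (fun u : Fin n => (u : ℕ) / x = (j : ℕ))).card = x := by
  have himg : ((Finset.univ : Finset (Fin n)).filter (fun u : Fin n => (u : ℕ) / x = (j : ℕ)))
      = (Finset.univ : Finset (Fin x)).image
        (fun r : Fin x => (⟨(j : ℕ) * x + (r : ℕ), by
          have h1 : (j : ℕ) + 1 ≤ m := j.isLt
          have h2 : (r : ℕ) < x := r.isLt
          calc (j : ℕ) * x + (r : ℕ) < (j : ℕ) * x + x := by omega
          _ = ((j : ℕ) + 1) * x := by ring
          _ ≤ m * x := Nat.mul_le_mul_right x h1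
          _ = n := hnx⟩ : Fin n)) := by
    ext u
    simp only [Finset.mem_filter, Finset.mem_univ, true_and, Finset.mem_image]
    constructor
    · intro hdiv
      have hmod : (u : ℕ) % x < x := Nat.mod_lt _ hx
      refine ⟨⟨(u : ℕ) % x, hmod⟩, ?_⟩
      apply Fin.ext
      simp only
      have hdm := Nat.div_add_mod (u : ℕ) x
      rw [hdiv, Nat.mul_comm] at hdm
      omega
    · rintro ⟨r, rfl⟩
      simp only
      rw [Nat.add_comm, Nat.add_mul_div_right _ _ hx, Nat.div_eq_of_lt r.isLt, Nat.zero_add]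
  rw [himg, Finset.card_image_of_injective _ (fun r₁ r₂ h => by
      apply Fin.ext
      have := congrArg Fin.val h
      simpa using this)]
  simp

theorem forward_dir (n m a : ℕ) (hm : 1 < m) (hmn : m < n) (ha : a * n = m * (n - m + 1))
    (hg : Nat.gcd n m = m) : IsKCriticalBipartite n m (cons1Adj n m a) := by
  classical
  have hm0 : 0 < m := by omega
  have hn0 : 0 < n := by omega
  have : NeZero m := ⟨by omega⟩
  set x := n / m with hxdef
  have hdvd : m ∣ n := hg ▸ Nat.gcd_dvd_left n m
  have hnx : m * x = n := Nat.mul_div_cancel' hdvd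
  have hx1 : 0 < x := Nat.div_pos (le_of_lt hmn) hm0
  have hax : a * x = n - m + 1 := by
    have h2 : m * (a * x) = m * (n - m + 1) := by
      calc m * (a * x) = a * (m * x) := by ring
      _ = a * n := by rw [hnx]
      _ = m * (n - m + 1) := ha
    exact Nat.eq_of_mul_eq_mul_left hm0 h2
  have ha1 : 1 ≤ a := by
    rcases Nat.eq_zero_or_pos a with h | h
    · subst h; omega
    · exact h
  intro U' hU'
  have hadj : ∀ (u : Fin n) (v : Fin m),
      cons1Adj n m a u v ↔ ∃ α < a, ((u : ℕ) / x + α) % m = (v : ℕ) := by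
    intro u v
    unfold cons1Adj
    rw [hg, Nat.div_self hm0]
    simp only [Nat.mul_one]
    exact Iff.rfl
  set t : Fin m → Finset (Fin n) :=
    fun v => U'.filter (fun u : Fin n => ∃ α < a, ((u : ℕ) / x + α) % m = (v : ℕ)) with htdef
  have hall : ∀ S : Finset (Fin m), S.card ≤ (S.biUnion t).card := by
    intro S
    rcases S.eq_empty_or_nonempty with rfl | hSne
    · simp
    have hs1 : 1 ≤ S.card := Finset.card_pos.mpr hSne
    have hsm : S.card ≤ m := by
      have := S.card_le_univ; rw [Fintype.card_fin] at this; exact this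
    -- ZMod picture
    have hcastinj : ∀ v₁ v₂ : Fin m, ((v₁ : ℕ) : ZMod m) = ((v₂ : ℕ) : ZMod m) → v₁ = v₂ := by
      intro v₁ v₂ h
      rw [ZMod.natCast_eq_natCast_iff] at h
      have h2 : (v₁ : ℕ) % m = (v₂ : ℕ) % m := h
      rw [Nat.mod_eq_of_lt v₁.isLt, Nat.mod_eq_of_lt v₂.isLt] at h2
      exact Fin.ext h2
    set SZ : Finset (ZMod m) := S.image (fun v : Fin m => ((v : ℕ) : ZMod m)) with hSZ
    have hSZcard : SZ.card = S.card :=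
      Finset.card_image_of_injOn (fun v₁ _ v₂ _ h => hcastinj v₁ v₂ h)
    have hSZne : SZ.Nonempty := hSne.image _
    have harc : min m (S.card + (a - 1)) ≤ (arcNb m a SZ).card := by
      have := arc_card (a - 1) SZ hSZne
      rw [Nat.sub_add_cancel ha1] at this
      rw [← hSZcard]
      exact this
    set BZ : Finset (ZMod m) := arcNb m a SZ with hBZ
    set B : Finset (Fin m) := Finset.univ.filter
      (fun j : Fin m => ((j : ℕ) : ZMod m) ∈ BZ) with hBdef
    have hBcard : B.card = BZ.card := by
      refine Finset.card_bij (fun (j : Fin m) _ => ((j : ℕ) : ZMod m)) ?_ ?_ ?_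
      · intro j hj; simpa [hBdef] using hj
      · intro j₁ h₁ j₂ h₂ h; exact hcastinj _ _ h
      · intro z hz
        refine ⟨⟨z.val, z.val_lt⟩, ?_, ?_⟩
        · simp only [hBdef, Finset.mem_filter, Finset.mem_univ, true_and]
          rwa [ZMod.natCast_val, ZMod.cast_id]
        · show ((z.val : ℕ) : ZMod m) = z
          rw [ZMod.natCast_val, ZMod.cast_id]
    -- block map
    set φ : Fin n → Fin m := fun u => ⟨(u : ℕ) / x, by
      have h : (u : ℕ) < x * m := by rw [Nat.mul_comm x m, hnx]; exact u.isLt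
      exact Nat.div_lt_of_lt_mul h⟩ with hφ
    set NS : Finset (Fin n) := Finset.univ.filter (fun u : Fin n => φ u ∈ B) with hNS
    have hbiU : S.biUnion t = U' ∩ NS := by
      ext u
      simp only [Finset.mem_biUnion, htdef, Finset.mem_filter, Finset.mem_inter, hNS,
        Finset.mem_univ, true_and, hBdef, hBZ, arcNb, Finset.mem_biUnion, Finset.mem_range,
        Finset.mem_image, hSZ, hφ]
      constructor
      · rintro ⟨v, hvS, huU, α, hα, hmod⟩
        refine ⟨huU, α, hα, ((v : ℕ) : ZMod m), ⟨v, hvS, rfl⟩, ?_⟩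
        rw [sub_eq_iff_eq_add]
        have : (((u : ℕ) / x + α : ℕ) : ZMod m) = ((v : ℕ) : ZMod m) := by
          rw [ZMod.natCast_eq_natCast_iff]
          show ((u : ℕ) / x + α) % m = (v : ℕ) % m
          rw [hmod, Nat.mod_eq_of_lt v.isLt]
        push_cast at this ⊢
        linear_combination -this
      · rintro ⟨huU, α, hα, w, ⟨v, hvS, rfl⟩, hw⟩
        refine ⟨v, hvS, huU, α, hα, ?_⟩
        rw [sub_eq_iff_eq_add] at hw
        have hcast : (((u : ℕ) / x + α : ℕ) : ZMod m) = ((v : ℕ) : ZMod m) := by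
          push_cast
          linear_combination hw.symm
        rw [ZMod.natCast_eq_natCast_iff] at hcast
        have h2 : ((u : ℕ) / x + α) % m = (v : ℕ) % m := hcast
        rw [Nat.mod_eq_of_lt v.isLt] at h2
        exact h2
    have hNScard : NS.card = B.card * x := by
      rw [Finset.card_eq_sum_card_fiberwise (f := φ) (t := B)
        (fun u hu => by simpa [hNS] using hu)]
      have : ∀ j ∈ B, (NS.filter (fun u => φ u = j)).card = x := by
        intro j hj
        have heq : NS.filter (fun u => φ u = j)
            = Finset.univ.filter (fun u : Fin n => (u : ℕ) / x = (j : ℕ)) := by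
          ext u
          simp only [Finset.mem_filter, hNS, Finset.mem_univ, true_and]
          constructor
          · rintro ⟨_, h⟩; rw [← h]
          · intro h
            have : φ u = j := Fin.ext h
            exact ⟨this ▸ hj, this⟩
        rw [heq, fiber_card n m x hx1 hnx j]
      rw [Finset.sum_congr rfl this, Finset.sum_const, smul_eq_mul]
    -- counting
    have hUnion : (U' ∪ NS).card ≤ n := by
      have := (U' ∪ NS).card_le_univ
      rwa [Fintype.card_fin] at this
    have hIE : U'.card + NS.card = (U' ∪ NS).card + (U' ∩ NS).card :=
      (Finset.card_union_add_card_inter U' NS).symm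
    rw [hbiU]
    by_cases hBm : m ≤ B.card
    · have hble := B.card_le_univ
      rw [Fintype.card_fin] at hble
      have hBuniv : B = Finset.univ := Finset.eq_univ_of_card B (by rw [Fintype.card_fin]; omega)
      have : NS = Finset.univ := by
        rw [hNS, hBuniv]; simp
      rw [this, Finset.inter_univ, hU']
      exact hsm
    · push_neg at hBm
      have hB2 : S.card + (a - 1) ≤ B.card := by
        rw [hBcard]; omega
      have hmul : (S.card + (a - 1)) * x ≤ B.card * x := Nat.mul_le_mul_right x hB2
      have hsplit : (S.card + (a - 1)) * x = (S.card - 1) * x + (n - m + 1) := by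
        have h3 : S.card + (a - 1) = (S.card - 1) + a := by omega
        rw [h3, Nat.add_mul, hax]
      have hs1x : S.card - 1 ≤ (S.card - 1) * x := Nat.le_mul_of_pos_right _ hx1
      rw [hU', hNScard] at hIE
      omega
  obtain ⟨f, hfinj, hf⟩ := (Finset.all_card_le_biUnion_card_iff_exists_injective t).mp hall
  refine ⟨f, hfinj, fun v => ?_⟩
  have := hf v
  rw [htdef] at this
  simp only [Finset.mem_filter] at this
  exact ⟨this.1, (hadj _ _).mpr this.2⟩

theorem backward_dir (n m a : ℕ) (hm : 1 < m) (hmn : m < n) (ha : a * n = m * (n - m + 1))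
    (hcrit : IsKCriticalBipartite n m (cons1Adj n m a)) : Nat.gcd n m = m := by
  classical
  by_contra hg
  have hm0 : 0 < m := by omega
  have hn0 : 0 < n := by omega
  set c := Nat.gcd n m with hc
  have hc0 : 0 < c := Nat.gcd_pos_of_pos_left m hn0
  set x := n / c with hx
  set y := m / c with hy
  have hnx : c * x = n := Nat.mul_div_cancel' (Nat.gcd_dvd_left n m)
  have hmy : c * y = m := Nat.mul_div_cancel' (Nat.gcd_dvd_right n m)
  have hcop : Nat.Coprime x y := Nat.coprime_div_gcd_div_gcd hc0
  have hclt : c < m := by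
    rcases Nat.lt_or_ge c m with h | h
    · exact h
    · exfalso
      have : c ∣ m := Nat.gcd_dvd_right n m
      have : c ≤ m := Nat.le_of_dvd hm0 this
      exact hg (by omega)
  have hy2 : 2 ≤ y := by
    rcases Nat.lt_or_ge y 2 with h | h
    · exfalso
      interval_cases y <;> omega
    · exact h
  have hx0 : 0 < x := Nat.div_pos (Nat.le_of_dvd hn0 (Nat.gcd_dvd_left n m)) hc0
  -- a * x = y * (n - m + 1)
  have hax : a * x = y * (n - m + 1) := by
    have h2 : c * (a * x) = c * (y * (n - m + 1)) := by
      calc c * (a * x) = a * (c * x) := by ring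
      _ = a * n := by rw [hnx]
      _ = m * (n - m + 1) := ha
      _ = (c * y) * (n - m + 1) := by rw [hmy]
      _ = c * (y * (n - m + 1)) := by ring
    exact Nat.eq_of_mul_eq_mul_left hc0 h2
  have hy0 : 0 < y := by omega
  have hydvd : y ∣ a := by
    have h1 : y ∣ a * x := ⟨n - m + 1, hax⟩
    exact Nat.Coprime.dvd_of_dvd_mul_right hcop.symm h1
  obtain ⟨q, hq⟩ := hydvd
  have hqx : q * x = n - m + 1 := by
    have h2 : y * (q * x) = y * (n - m + 1) := by
      calc y * (q * x) = (y * q) * x := by ring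
      _ = a * x := by rw [hq]
      _ = y * (n - m + 1) := hax
    exact Nat.eq_of_mul_eq_mul_left hy0 h2
  have hq0 : 0 < q := by
    rcases Nat.eq_zero_or_pos q with h | h
    · exfalso; subst h; omega
    · exact h
  have haval : a < m := by
    have h1 : a * n < m * n := by
      calc a * n = m * (n - m + 1) := ha
      _ < m * n := mul_lt_mul_of_pos_left (by omega) hm0
    exact Nat.lt_of_mul_lt_mul_right h1
  have hay : a = q * y := by rw [hq]; ring
  have ha2 : y ≤ a := by
    calc y = 1 * y := (Nat.one_mul y).symm
    _ ≤ q * y := Nat.mul_le_mul_right y hq0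
    _ = a := hay.symm
  have hqxn : q * x ≤ n := by omega
  -- the bad set U'
  set U' : Finset (Fin n) := insert ⟨0, hn0⟩
    (Finset.univ.filter (fun u : Fin n => q * x ≤ (u : ℕ))) with hU'def
  have hfiltcard : (Finset.univ.filter (fun u : Fin n => q * x ≤ (u : ℕ))).card = m - 1 := by
    have hcb : ((Finset.range n).filter (fun i => q * x ≤ i)).card = m - 1 := by
      have : (Finset.range n).filter (fun i => q * x ≤ i) = Finset.Ico (q * x) n := by
        ext i
        simp only [Finset.mem_filter, Finset.mem_range, Finset.mem_Ico]
        omega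
      rw [this, Nat.card_Ico]
      omega
    rw [← hcb]
    apply Finset.card_bij (fun (u : Fin n) _ => (u : ℕ))
    · intro u hu
      simp only [Finset.mem_filter, Finset.mem_univ, true_and] at hu
      simp only [Finset.mem_filter, Finset.mem_range]
      exact ⟨u.isLt, hu⟩
    · intro u₁ _ u₂ _ h; exact Fin.ext h
    · intro i hi
      simp only [Finset.mem_filter, Finset.mem_range] at hi
      exact ⟨⟨i, hi.1⟩, by simp only [Finset.mem_filter, Finset.mem_univ, true_and]; exact hi.2, rfl⟩
  have hU'card : U'.card = m := by
    rw [hU'def, Finset.card_insert_of_notMem, hfiltcard]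
    · omega
    · simp only [Finset.mem_filter, Finset.mem_univ, true_and]
      omega
  obtain ⟨f, hfinj, hf⟩ := hcrit U' hU'card
  -- the two problematic vertices
  have hamlt : a - 1 < m := by omega
  have haylt : a - y < m := by omega
  set v₁ : Fin m := ⟨a - y, haylt⟩ with hv₁
  set v₂ : Fin m := ⟨a - 1, hamlt⟩ with hv₂
  have hv12 : v₁ ≠ v₂ := by
    intro h
    have := congrArg Fin.val h
    simp only [hv₁, hv₂] at this
    omega
  -- any matched vertex for a window vertex must be u_0
  have hforce : ∀ v : Fin m, a - y ≤ (v : ℕ) → (v : ℕ) < a → (f v : ℕ) = 0 := by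
    intro v hv1 hv2
    obtain ⟨hmem, hadj⟩ := hf v
    rw [hU'def, Finset.mem_insert] at hmem
    rcases hmem with h | h
    · exact congrArg Fin.val h
    · exfalso
      simp only [Finset.mem_filter, Finset.mem_univ, true_and] at h
      obtain ⟨α, hα, hmod⟩ := hadj
      rw [← hx, ← hy] at hmod
      set u : ℕ := (f v : ℕ) with hu
      set j : ℕ := u / x with hj
      have hjq : q ≤ j := by
        rw [hj]
        calc q = q * x / x := (Nat.mul_div_cancel q hx0).symm
        _ ≤ u / x := Nat.div_le_div_right h
      have hjc : j < c := by
        rw [hj]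
        apply Nat.div_lt_of_lt_mul
        rw [Nat.mul_comm x c, hnx]
        exact (f v).isLt
      have hjy1 : a ≤ j * y := by
        calc a = q * y := hay
        _ ≤ j * y := Nat.mul_le_mul_right y hjq
      have hjy2 : j * y + y ≤ m := by
        calc j * y + y = (j + 1) * y := by ring
        _ ≤ c * y := Nat.mul_le_mul_right y (by omega)
        _ = m := hmy
      -- (j * y + α) % m = v, but impossible
      rcases Nat.lt_or_ge (j * y + α) m with hlt | hge
      · rw [Nat.mod_eq_of_lt hlt] at hmod
        omega
      · have h2m : j * y + α < 2 * m := by omega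
        have : (j * y + α) % m = j * y + α - m := by
          rw [Nat.mod_eq_sub_mod hge, Nat.mod_eq_of_lt (by omega)]
        rw [this] at hmod
        omega
  have h1 := hforce v₁ (by simp [hv₁]) (by simp [hv₁]; omega)
  have h2 := hforce v₂ (by simp [hv₂]; omega) (by simp [hv₂]; omega)
  exact hv12 (hfinj (Fin.ext (h1.trans h2.symm)))

/-- **Observation (kcons1).** Let `n, m, k` be positive integers such that `1 < m < n`,
`k = n − m`, `b = n − m + 1`, and `a = m·(n−m+1)/n` is an integer. Then the graph `G₁`
given by Construction 1 is `k`-critical bipartite if and only if `gcd(n,m) = m`. -/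
theorem stmt_15 (n m k a b : ℕ) (hm : 1 < m) (hmn : m < n)
    (hk : k = n - m) (hb : b = n - m + 1) (ha : a * n = m * (n - m + 1)) :
    IsKCriticalBipartite n m (cons1Adj n m a) ↔ Nat.gcd n m = m :=
  ⟨fun h => backward_dir n m a hm hmn ha h, fun h => forward_dir n m a hm hmn ha h⟩
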